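/- If a function R : ℕ × ℕ → ℕ satisfies R(d,ℓ) = 1 when d = 0 or ℓ = 0, and R(d,ℓ) ≤ 1 + 2·R(d,ℓ-1) + R(d-1,ℓ) for all d,ℓ ≥ 1, then R(d,ℓ) ≤ 2^(ℓ+1) · C(d+ℓ, ℓ) − 1 for all d,ℓ ∈ ℕ. -/

import Mathlib

/-- The recurrence bounding the number of recursive calls in the Liverpool
variant of the quasipolynomial recursive parity game algorithm:
if `R (d, ℓ) = 1` whenever `d = 0` or `ℓ = 0`, and
`R (d, ℓ) ≤ 1 + 2 * R (d, ℓ - 1) + R (d - 1, ℓ)` for all `d, ℓ ≥ 1`, then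
`R (d, ℓ) ≤ 2 ^ (ℓ + 1) * (d + ℓ).choose ℓ - 1` for all `d, ℓ`. -/
theorem liverpool_recurrence_bound (R : ℕ × ℕ → ℕ)
    (hbase : ∀ d ℓ : ℕ, d = 0 ∨ ℓ = 0 → R (d, ℓ) = 1)
    (hrec : ∀ d ℓ : ℕ, 1 ≤ d → 1 ≤ ℓ →
      R (d, ℓ) ≤ 1 + 2 * R (d, ℓ - 1) + R (d - 1, ℓ)) :
    ∀ d ℓ : ℕ, R (d, ℓ) ≤ 2 ^ (ℓ + 1) * (d + ℓ).choose ℓ - 1 := by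
  intro d
  induction d with
  | zero =>
    intro ℓ
    rw [hbase 0 ℓ (Or.inl rfl), Nat.zero_add, Nat.choose_self]
    have h2 : 2 ≤ 2 ^ (ℓ + 1) := by
      calc 2 = 2 ^ 1 := rfl
        _ ≤ 2 ^ (ℓ + 1) := Nat.pow_le_pow_right (by norm_num) (by omega)
    omega
  | succ d ih =>
    intro ℓ
    induction ℓ with
    | zero =>
      rw [hbase _ 0 (Or.inr rfl)]
      simp [Nat.choose_zero_right]
    | succ ℓ ihl =>
      have h1 := hrec (d + 1) (ℓ + 1) (by omega) (by omega)
      simp only [Nat.add_sub_cancel] at h1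
      have h2 := ihl
      have h3 := ih (ℓ + 1)
      have pascal : (d + 1 + (ℓ + 1)).choose (ℓ + 1)
          = (d + 1 + ℓ).choose ℓ + (d + (ℓ + 1)).choose (ℓ + 1) := by
        have : d + 1 + (ℓ + 1) = (d + 1 + ℓ) + 1 := by omega
        rw [this, Nat.choose_succ_succ]
        congr 2
        omega
      set x := 2 ^ (ℓ + 1) * (d + 1 + ℓ).choose ℓ with hx
      set y := 2 ^ (ℓ + 1 + 1) * (d + (ℓ + 1)).choose (ℓ + 1) with hy
      have hx1 : 1 ≤ x := by
        have := Nat.choose_pos (show ℓ ≤ d + 1 + ℓ by omega)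
        have := (show 0 < 2 ^ (ℓ + 1) from Nat.pow_pos (by norm_num))
        exact Nat.one_le_iff_ne_zero.mpr (Nat.mul_ne_zero (by omega) (by omega))
      have hy1 : 1 ≤ y := by
        have := Nat.choose_pos (show ℓ + 1 ≤ d + (ℓ + 1) by omega)
        have := (show 0 < 2 ^ (ℓ + 1 + 1) from Nat.pow_pos (by norm_num))
        exact Nat.one_le_iff_ne_zero.mpr (Nat.mul_ne_zero (by omega) (by omega))
      have htarget : 2 ^ (ℓ + 1 + 1) * (d + 1 + (ℓ + 1)).choose (ℓ + 1)
          = 2 * x + y := by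
        rw [pascal, Nat.mul_add, hx, hy]
        ring
      rw [htarget]
      omega
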